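/- Let (ρ₁,ρ₂) be density matrices on ℂ^n and (ρ₁′,ρ₂′) be density matrices on ℂ^m with ρ₁′ ≠ ρ₂′ and supp(ρ₁′) ⊆ supp(ρ₂′). Set M′ := inf{ λ : λρ₂′ − ρ₁′ ≥ 0 } and m′ := sup{ λ : ρ₁′ − λρ₂′ ≥ 0 } (so m′ < 1 < M′ < ∞). Define the 2×2 diagonal density matrices σ₁ := (1/(M′−m′))·diag(M′(1−m′), m′(M′−1)) and σ₂ := (1/(M′−m′))·diag(1−m′, M′−1). Then there exists a test-and-prepare channel ℰ(ρ) = Tr[Eρ]·ξ₁ + Tr[(𝟙−E)ρ]·ξ₂ (for some 0 ≤ E ≤ 𝟙ₙ and density matrices ξ₁, ξ₂ on ℂ^m) with ℰ(ρ₁) = ρ₁′ and ℰ(ρ₂) = ρ₂′ if and only if ‖ρ₁ − tρ₂‖₁ ≥ ‖σ₁ − tσ₂‖₁ for all t ≥ 0. -/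

import Mathlib

open scoped ComplexOrder

/-- The positive semidefinite square root of a positive semidefinite matrix
(the definition Mathlib had, removed since). -/
noncomputable def Matrix.PosSemidef.sqrt {n : Type*} [Fintype n] [DecidableEq n]
    {A : Matrix n n ℂ} (hA : A.PosSemidef) : Matrix n n ℂ :=
  hA.1.eigenvectorUnitary.1 * Matrix.diagonal ((↑) ∘ (√·) ∘ hA.1.eigenvalues) *
  (star hA.1.eigenvectorUnitary : Matrix n n ℂ)

/-- The trace norm of a matrix, `‖A‖₁ = Tr[√(AᴴA)]`. -/
noncomputable def traceNorm {n : ℕ} (A : Matrix (Fin n) (Fin n) ℂ) : ℝ :=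
  ((Matrix.posSemidef_conjTranspose_mul_self A).sqrt).trace.re

/-- `sup(A/B) = inf { λ : λB - A ≥ 0 }`. -/
noncomputable def supRatio {k : ℕ} (A B : Matrix (Fin k) (Fin k) ℂ) : ℝ :=
  sInf { lam : ℝ | ((lam : ℂ) • B - A).PosSemidef }

/-- `inf(A/B) = sup { λ : A - λB ≥ 0 }`. -/
noncomputable def infRatio {k : ℕ} (A B : Matrix (Fin k) (Fin k) ℂ) : ℝ :=
  sSup { lam : ℝ | (A - (lam : ℂ) • B).PosSemidef }

namespace Matrix.PosSemidef
variable {n : Type*} [Fintype n] [DecidableEq n]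

lemma posSemidef_sqrt {A : Matrix n n ℂ} (hA : A.PosSemidef) : hA.sqrt.PosSemidef := by
  have h := (Matrix.PosSemidef.diagonal (d := ((↑) ∘ (√·) ∘ hA.1.eigenvalues : n → ℂ))
    (fun i => by simp [Complex.zero_le_real, Real.sqrt_nonneg])).mul_mul_conjTranspose_same
    (hA.1.eigenvectorUnitary : Matrix n n ℂ)
  rw [← Matrix.star_eq_conjTranspose] at h
  exact h

lemma sqrt_mul_self {A : Matrix n n ℂ} (hA : A.PosSemidef) : hA.sqrt * hA.sqrt = A := by
  have hU : star (hA.1.eigenvectorUnitary : Matrix n n ℂ) *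
      (hA.1.eigenvectorUnitary : Matrix n n ℂ) = 1 := Unitary.coe_star_mul_self _
  have hd : Matrix.diagonal ((↑) ∘ (√·) ∘ hA.1.eigenvalues : n → ℂ) *
      Matrix.diagonal ((↑) ∘ (√·) ∘ hA.1.eigenvalues : n → ℂ)
      = Matrix.diagonal (RCLike.ofReal ∘ hA.1.eigenvalues) := by
    rw [Matrix.diagonal_mul_diagonal]
    congr 1
    funext i
    simp only [Function.comp_apply]
    rw [← Complex.ofReal_mul, Real.mul_self_sqrt (hA.eigenvalues_nonneg i)]
    rfl
  conv_rhs => rw [hA.1.spectral_theorem, Unitary.conjStarAlgAut_apply]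
  unfold Matrix.PosSemidef.sqrt
  simp only [Matrix.mul_assoc]
  rw [← Matrix.mul_assoc (star (hA.1.eigenvectorUnitary : Matrix n n ℂ)), hU, Matrix.one_mul,
    ← Matrix.mul_assoc (Matrix.diagonal _), hd]

lemma eq_of_sq_eq_sq' {A B : Matrix n n ℂ} (hA : A.PosSemidef) (hB : B.PosSemidef)
    (hAB : A ^ 2 = B ^ 2) : A = B := by
  by_contra h_ne
  obtain ⟨v, t, ht, hv, hv'⟩ :=
    (hA.1.sub hB.1).exists_eigenvector_of_ne_zero (sub_ne_zero.mpr h_ne)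
  have hsa : star v ᵥ* (A - B) = (t : ℂ) • star v := by
    have := congrArg star hv'
    rw [Matrix.star_mulVec, (hA.1.sub hB.1).eq] at this
    rw [this]
    ext i
    simp [Complex.conj_ofReal]
  have h_sum : 0 = (t : ℂ) * (star v ⬝ᵥ A *ᵥ v + star v ⬝ᵥ B *ᵥ v) := by
    have e1 : star v ⬝ᵥ (A ^ 2 - B ^ 2) *ᵥ v
        = star v ⬝ᵥ A *ᵥ ((A - B) *ᵥ v) + (star v ᵥ* (A - B)) ⬝ᵥ B *ᵥ v := by
      rw [← Matrix.dotProduct_mulVec, Matrix.mulVec_mulVec, Matrix.mulVec_mulVec,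
        ← dotProduct_add, ← Matrix.add_mulVec, pow_two, pow_two]
      congr 2
      noncomm_ring
    rw [hAB, sub_self, Matrix.zero_mulVec, dotProduct_zero, hv', hsa, Matrix.mulVec_smul,
      dotProduct_smul, smul_dotProduct] at e1
    rw [e1]
    simp only [Complex.real_smul, smul_eq_mul]
    ring
  have ht' : (t : ℂ) ≠ 0 := Complex.ofReal_ne_zero.mpr ht
  have hsum : star v ⬝ᵥ A *ᵥ v + star v ⬝ᵥ B *ᵥ v = 0 := by
    rcases mul_eq_zero.mp h_sum.symm with h | h
    · exact absurd h ht'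
    · exact h
  have h1 := hA.dotProduct_mulVec_nonneg v
  have h2 := hB.dotProduct_mulVec_nonneg v
  have hA0 : star v ⬝ᵥ A *ᵥ v = 0 := by
    apply le_antisymm _ h1
    rw [add_eq_zero_iff_eq_neg] at hsum
    rw [hsum]; exact neg_nonpos.mpr h2
  have hB0 : star v ⬝ᵥ B *ᵥ v = 0 := by
    rw [hA0, zero_add] at hsum; exact hsum
  have : star v ⬝ᵥ (A - B) *ᵥ v = 0 := by
    rw [Matrix.sub_mulVec, dotProduct_sub, hA0, hB0, sub_zero]
  rw [hv', dotProduct_smul, Complex.real_smul] at this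
  rcases mul_eq_zero.mp this with h | h
  · exact ht' h
  · exact hv (dotProduct_star_self_eq_zero.mp h)

lemma eq_sqrt_of_sq_eq {A B : Matrix n n ℂ} (hA : A.PosSemidef) (hB : B.PosSemidef)
    (hAB : A ^ 2 = B) : A = hB.sqrt := by
  refine eq_of_sq_eq_sq' hA hB.posSemidef_sqrt ?_
  rw [hAB, pow_two, hB.sqrt_mul_self]

end Matrix.PosSemidef

open Matrix

namespace TP
variable {k : ℕ}

lemma trace_nonneg {M : Matrix (Fin k) (Fin k) ℂ} (h : M.PosSemidef) : 0 ≤ M.trace := by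
  rw [Matrix.trace]
  refine Finset.sum_nonneg fun i _ => ?_
  have := h.dotProduct_mulVec_nonneg (Pi.single i 1)
  simpa [dotProduct, Matrix.mulVec, Pi.single_apply] using this

lemma trace_mul_nonneg {E P : Matrix (Fin k) (Fin k) ℂ} (hE : E.PosSemidef)
    (hP : P.PosSemidef) : 0 ≤ (E * P).trace := by
  have h1 : E * P = E * (hP.sqrt * hP.sqrt) := by rw [hP.sqrt_mul_self]
  have h2 : (E * (hP.sqrt * hP.sqrt)).trace = (hP.sqrt * E * hP.sqrt).trace := by
    rw [← Matrix.mul_assoc, Matrix.trace_mul_cycle]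
  rw [h1, h2]
  have hsym : hP.sqrt.conjTranspose = hP.sqrt := hP.posSemidef_sqrt.1
  have := hE.conjTranspose_mul_mul_same hP.sqrt
  rw [hsym] at this
  exact trace_nonneg this

lemma trace_mul_real {E A : Matrix (Fin k) (Fin k) ℂ} (hE : E.IsHermitian)
    (hA : A.IsHermitian) : (E * A).trace = (((E * A).trace.re : ℝ) : ℂ) := by
  have h : (starRingEnd ℂ) ((E * A).trace) = (E * A).trace := by
    have : ((E * A)ᴴ).trace = (starRingEnd ℂ) ((E * A).trace) := by
      rw [Matrix.trace_conjTranspose]; rfl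
    rw [← this, Matrix.conjTranspose_mul, hE.eq, hA.eq, Matrix.trace_mul_comm]
  exact (Complex.conj_eq_iff_re.mp h).symm

lemma smul_psd {M : Matrix (Fin k) (Fin k) ℂ} {c : ℝ} (hc : 0 ≤ c) (h : M.PosSemidef) :
    ((c : ℂ) • M).PosSemidef := by
  refine Matrix.PosSemidef.of_dotProduct_mulVec_nonneg ?_ ?_
  · rw [Matrix.IsHermitian, Matrix.conjTranspose_smul, h.1.eq]
    congr 1
    simp [Complex.star_def, Complex.conj_ofReal]
  · intro x
    rw [Matrix.smul_mulVec, dotProduct_smul]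
    have := h.dotProduct_mulVec_nonneg x
    rw [smul_eq_mul]
    exact mul_nonneg (by exact_mod_cast Complex.zero_le_real.mpr hc) this

lemma conj_trace (U : Matrix.unitaryGroup (Fin k) ℂ) (M : Matrix (Fin k) (Fin k) ℂ) :
    ((U : Matrix (Fin k) (Fin k) ℂ) * M * star (U : Matrix (Fin k) (Fin k) ℂ)).trace
      = M.trace := by
  rw [Matrix.trace_mul_cycle, Unitary.coe_star_mul_self, one_mul]

lemma conj_psd (U : Matrix.unitaryGroup (Fin k) ℂ) {M : Matrix (Fin k) (Fin k) ℂ}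
    (h : M.PosSemidef) :
    ((U : Matrix (Fin k) (Fin k) ℂ) * M * star (U : Matrix (Fin k) (Fin k) ℂ)).PosSemidef := by
  have := h.mul_mul_conjTranspose_same (U : Matrix (Fin k) (Fin k) ℂ)
  rwa [Matrix.star_eq_conjTranspose]

lemma conj_mul_conj (U : Matrix.unitaryGroup (Fin k) ℂ) (M N : Matrix (Fin k) (Fin k) ℂ) :
    ((U : Matrix (Fin k) (Fin k) ℂ) * M * star (U : Matrix (Fin k) (Fin k) ℂ)) *
      ((U : Matrix (Fin k) (Fin k) ℂ) * N * star (U : Matrix (Fin k) (Fin k) ℂ))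
      = (U : Matrix (Fin k) (Fin k) ℂ) * (M * N) * star (U : Matrix (Fin k) (Fin k) ℂ) := by
  have h : star (U : Matrix (Fin k) (Fin k) ℂ) * (U : Matrix (Fin k) (Fin k) ℂ) = 1 :=
    Unitary.coe_star_mul_self U
  simp only [Matrix.mul_assoc]
  rw [← Matrix.mul_assoc (star (U : Matrix (Fin k) (Fin k) ℂ)) (U : Matrix (Fin k) (Fin k) ℂ),
    h, one_mul]


end TP
namespace TPB
variable {k : ℕ}
variable {k : ℕ}

lemma quad_conj (U : Matrix.unitaryGroup (Fin k) ℂ) (f : Fin k → ℂ) (y : Fin k → ℂ) :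
    star y ⬝ᵥ (((U : Matrix (Fin k) (Fin k) ℂ) * Matrix.diagonal f *
        star (U : Matrix (Fin k) (Fin k) ℂ)) *ᵥ y)
      = ∑ i, f i * ((Complex.normSq ((star (U : Matrix (Fin k) (Fin k) ℂ) *ᵥ y) i) : ℝ) : ℂ) := by
  set Um : Matrix (Fin k) (Fin k) ℂ := (U : Matrix (Fin k) (Fin k) ℂ)
  set w : Fin k → ℂ := star Um *ᵥ y with hw
  have h1 : (Um * Matrix.diagonal f * star Um) *ᵥ y = Um *ᵥ (Matrix.diagonal f *ᵥ w) := by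
    rw [hw, Matrix.mulVec_mulVec, Matrix.mulVec_mulVec, Matrix.mul_assoc]
  rw [h1, Matrix.dotProduct_mulVec]
  have h2 : star y ᵥ* Um = star w := by
    rw [hw, Matrix.star_mulVec, Matrix.star_eq_conjTranspose, Matrix.conjTranspose_conjTranspose]
  rw [h2]
  simp only [dotProduct, Matrix.mulVec_diagonal, Pi.star_apply]
  refine Finset.sum_congr rfl fun i _ => ?_
  rw [Complex.star_def, mul_comm ((starRingEnd ℂ) (w i)), mul_assoc, Complex.mul_conj']
  rw [Complex.normSq_eq_norm_sq]
  push_cast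
  ring

lemma quad_one (U : Matrix.unitaryGroup (Fin k) ℂ) (y : Fin k → ℂ) :
    star y ⬝ᵥ y
      = ∑ i, ((Complex.normSq ((star (U : Matrix (Fin k) (Fin k) ℂ) *ᵥ y) i) : ℝ) : ℂ) := by
  have h := quad_conj U (fun _ => 1) y
  have h1 : (U : Matrix (Fin k) (Fin k) ℂ) * Matrix.diagonal (fun _ => (1:ℂ)) *
      star (U : Matrix (Fin k) (Fin k) ℂ) = 1 := by
    rw [Matrix.diagonal_one, mul_one]
    exact Unitary.coe_mul_star_self U
  rw [h1, Matrix.one_mulVec] at h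
  simpa using h

lemma trace_hermitian {A : Matrix (Fin k) (Fin k) ℂ} (hA : A.IsHermitian) :
    A.trace = ((∑ i, hA.eigenvalues i : ℝ) : ℂ) := by
  conv_lhs => rw [hA.spectral_theorem, Unitary.conjStarAlgAut_apply]
  rw [TP.conj_trace hA.eigenvectorUnitary, Matrix.trace_diagonal]
  push_cast
  rfl

lemma quad_le_trace {M : Matrix (Fin k) (Fin k) ℂ} (hM : M.PosSemidef) (y : Fin k → ℂ) :
    star y ⬝ᵥ (M *ᵥ y) ≤ M.trace * (star y ⬝ᵥ y) := by
  have hH := hM.1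
  set U := hH.eigenvectorUnitary
  set d := hH.eigenvalues with hd
  set s : Fin k → ℝ := fun i => Complex.normSq ((star (U : Matrix (Fin k) (Fin k) ℂ) *ᵥ y) i)
    with hs
  have h1 : star y ⬝ᵥ (M *ᵥ y) = ((∑ i, d i * s i : ℝ) : ℂ) := by
    conv_lhs => rw [hH.spectral_theorem, Unitary.conjStarAlgAut_apply]
    rw [quad_conj U (RCLike.ofReal ∘ d) y]
    push_cast
    rfl
  have h2 : star y ⬝ᵥ y = ((∑ i, s i : ℝ) : ℂ) := by
    rw [quad_one U y]; push_cast; rfl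
  rw [h1, h2, trace_hermitian hH, ← Complex.ofReal_mul, Complex.real_le_real]
  have hd0 : ∀ i, 0 ≤ d i := hM.eigenvalues_nonneg
  have hs0 : ∀ i, 0 ≤ s i := fun i => Complex.normSq_nonneg _
  calc ∑ i, d i * s i ≤ ∑ i, d i * ∑ j, s j := by
        refine Finset.sum_le_sum fun i _ => ?_
        exact mul_le_mul_of_nonneg_left
          (Finset.single_le_sum (fun j _ => hs0 j) (Finset.mem_univ i)) (hd0 i)
    _ = (∑ i, d i) * ∑ j, s j := by rw [← Finset.sum_mul]

end TPB



namespace TPC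
variable {k : ℕ}

lemma sqrt_eq_of_hermitian {A : Matrix (Fin k) (Fin k) ℂ} (hA : A.IsHermitian) :
    (Matrix.posSemidef_conjTranspose_mul_self A).sqrt
      = (hA.eigenvectorUnitary : Matrix (Fin k) (Fin k) ℂ) *
        Matrix.diagonal (fun i => ((|hA.eigenvalues i| : ℝ) : ℂ)) *
        star (hA.eigenvectorUnitary : Matrix (Fin k) (Fin k) ℂ) := by
  set U := hA.eigenvectorUnitary
  set d := hA.eigenvalues
  set B : Matrix (Fin k) (Fin k) ℂ := (U : Matrix (Fin k) (Fin k) ℂ) *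
    Matrix.diagonal (fun i => ((|d i| : ℝ) : ℂ)) * star (U : Matrix (Fin k) (Fin k) ℂ) with hB
  have hBpsd : B.PosSemidef := by
    refine TP.conj_psd U (Matrix.PosSemidef.diagonal ?_)
    intro i
    exact Complex.zero_le_real.mpr (abs_nonneg _)
  have hsq : B ^ 2 = Aᴴ * A := by
    have hdiag : Matrix.diagonal (fun i => ((|d i| : ℝ) : ℂ)) *
        Matrix.diagonal (fun i => ((|d i| : ℝ) : ℂ))
        = Matrix.diagonal (RCLike.ofReal ∘ d) * Matrix.diagonal (RCLike.ofReal ∘ d) := by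
      rw [Matrix.diagonal_mul_diagonal, Matrix.diagonal_mul_diagonal]
      refine congrArg Matrix.diagonal ?_
      funext i
      simp only [Function.comp_apply]
      show ((|d i| : ℝ) : ℂ) * ((|d i| : ℝ) : ℂ) = ((d i : ℝ) : ℂ) * ((d i : ℝ) : ℂ)
      rw [← Complex.ofReal_mul, ← Complex.ofReal_mul, abs_mul_abs_self]
    rw [pow_two, hB, TP.conj_mul_conj, hdiag, ← TP.conj_mul_conj, ← Unitary.conjStarAlgAut_apply (S := ℂ), ← hA.spectral_theorem, hA.eq]
  exact (hBpsd.eq_sqrt_of_sq_eq (Matrix.posSemidef_conjTranspose_mul_self A) hsq).symm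

lemma traceNorm_eq_sum_abs {A : Matrix (Fin k) (Fin k) ℂ} (hA : A.IsHermitian) :
    traceNorm A = ∑ i, |hA.eigenvalues i| := by
  rw [traceNorm, sqrt_eq_of_hermitian hA, TP.conj_trace, Matrix.trace_diagonal]
  rw [← Complex.ofReal_sum]
  exact Complex.ofReal_re _

lemma traceNorm_diag2 (a b : ℝ) :
    traceNorm (Matrix.diagonal ![(a:ℂ), (b:ℂ)]) = |a| + |b| := by
  set A : Matrix (Fin 2) (Fin 2) ℂ := Matrix.diagonal ![(a:ℂ), (b:ℂ)]
  set B : Matrix (Fin 2) (Fin 2) ℂ := Matrix.diagonal ![((|a|:ℝ):ℂ), ((|b|:ℝ):ℂ)] with hB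
  have hBpsd : B.PosSemidef := by
    refine Matrix.PosSemidef.diagonal ?_
    intro i
    fin_cases i <;> exact Complex.zero_le_real.mpr (abs_nonneg _)
  have hsq : B ^ 2 = Aᴴ * A := by
    rw [pow_two, hB, Matrix.diagonal_mul_diagonal, Matrix.diagonal_conjTranspose,
      Matrix.diagonal_mul_diagonal]
    refine congrArg Matrix.diagonal ?_
    funext i
    fin_cases i <;>
      simp [Complex.conj_ofReal, ← Complex.ofReal_mul, abs_mul_abs_self]
  rw [traceNorm, ← hBpsd.eq_sqrt_of_sq_eq (Matrix.posSemidef_conjTranspose_mul_self A) hsq,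
    hB, Matrix.trace_diagonal]
  simp [Fin.sum_univ_two]

end TPC

namespace TPD
variable {k : ℕ}

lemma conj_sub (U : Matrix.unitaryGroup (Fin k) ℂ) (M N : Matrix (Fin k) (Fin k) ℂ) :
    (U : Matrix (Fin k) (Fin k) ℂ) * M * star (U : Matrix (Fin k) (Fin k) ℂ) -
      (U : Matrix (Fin k) (Fin k) ℂ) * N * star (U : Matrix (Fin k) (Fin k) ℂ)
      = (U : Matrix (Fin k) (Fin k) ℂ) * (M - N) * star (U : Matrix (Fin k) (Fin k) ℂ) := by
  rw [Matrix.mul_sub, Matrix.sub_mul]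

lemma trace_EP_nonneg {E P : Matrix (Fin k) (Fin k) ℂ} (hE : E.PosSemidef)
    (hP : P.PosSemidef) : 0 ≤ (E * P).trace.re :=
  (Complex.le_def.mp (TP.trace_mul_nonneg hE hP)).1

lemma trace_one_sub_mul (E A : Matrix (Fin k) (Fin k) ℂ) :
    (((1 : Matrix (Fin k) (Fin k) ℂ) - E) * A).trace = A.trace - (E * A).trace := by
  rw [Matrix.sub_mul, one_mul, Matrix.trace_sub]

lemma trace_EP_le {E P : Matrix (Fin k) (Fin k) ℂ} (hE : E.PosSemidef)
    (hE1 : ((1 : Matrix (Fin k) (Fin k) ℂ) - E).PosSemidef) (hP : P.PosSemidef) :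
    (E * P).trace.re ≤ P.trace.re := by
  have h := trace_EP_nonneg hE1 hP
  rw [trace_one_sub_mul, Complex.sub_re] at h
  linarith

lemma decomp {A : Matrix (Fin k) (Fin k) ℂ} (hA : A.IsHermitian) :
    ∃ P N : Matrix (Fin k) (Fin k) ℂ, P.PosSemidef ∧ N.PosSemidef ∧ A = P - N ∧
      P.trace = ((∑ i, max (hA.eigenvalues i) 0 : ℝ) : ℂ) ∧
      N.trace = ((∑ i, max (-hA.eigenvalues i) 0 : ℝ) : ℂ) := by
  set U := hA.eigenvectorUnitary
  set d := hA.eigenvalues with hd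
  refine ⟨(U : Matrix (Fin k) (Fin k) ℂ) * Matrix.diagonal (fun i => ((max (d i) 0 : ℝ) : ℂ)) *
      star (U : Matrix (Fin k) (Fin k) ℂ),
    (U : Matrix (Fin k) (Fin k) ℂ) * Matrix.diagonal (fun i => ((max (-d i) 0 : ℝ) : ℂ)) *
      star (U : Matrix (Fin k) (Fin k) ℂ), ?_, ?_, ?_, ?_, ?_⟩
  · exact TP.conj_psd U (Matrix.PosSemidef.diagonal fun i =>
      Complex.zero_le_real.mpr (le_max_right _ _))
  · exact TP.conj_psd U (Matrix.PosSemidef.diagonal fun i =>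
      Complex.zero_le_real.mpr (le_max_right _ _))
  · rw [conj_sub, Matrix.diagonal_sub]
    have : (fun i => ((max (d i) 0 : ℝ) : ℂ) - ((max (-d i) 0 : ℝ) : ℂ))
        = (RCLike.ofReal ∘ d) := by
      funext i
      rw [← Complex.ofReal_sub, max_zero_sub_max_neg_zero_eq_self]
      rfl
    rw [this, ← Unitary.conjStarAlgAut_apply (S := ℂ), ← hA.spectral_theorem]
  · rw [TP.conj_trace, Matrix.trace_diagonal, ← Complex.ofReal_sum]
  · rw [TP.conj_trace, Matrix.trace_diagonal, ← Complex.ofReal_sum]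

lemma abs_eq_maxes (x : ℝ) : |x| = max x 0 + max (-x) 0 := by
  rcases le_total x 0 with h | h
  · rw [abs_of_nonpos h, max_eq_right h, max_eq_left (by linarith), zero_add]
  · rw [abs_of_nonneg h, max_eq_left h, max_eq_right (by linarith), add_zero]

lemma traceNorm_herm_eq {A : Matrix (Fin k) (Fin k) ℂ} (hA : A.IsHermitian) :
    traceNorm A = (∑ i, max (hA.eigenvalues i) 0) + ∑ i, max (-hA.eigenvalues i) 0 := by
  rw [TPC.traceNorm_eq_sum_abs hA, ← Finset.sum_add_distrib]
  exact Finset.sum_congr rfl fun i _ => abs_eq_maxes _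

lemma abs_bound {A E : Matrix (Fin k) (Fin k) ℂ} (hA : A.IsHermitian) (hE : E.PosSemidef)
    (hE1 : ((1 : Matrix (Fin k) (Fin k) ℂ) - E).PosSemidef) :
    |(E * A).trace.re| + |(((1 : Matrix (Fin k) (Fin k) ℂ) - E) * A).trace.re|
      ≤ traceNorm A := by
  obtain ⟨P, N, hP, hN, hPN, hPt, hNt⟩ := decomp hA
  set a := (E * P).trace.re
  set b := (E * N).trace.re
  set p := (∑ i, max (hA.eigenvalues i) 0 : ℝ)
  set q := (∑ i, max (-hA.eigenvalues i) 0 : ℝ)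
  have hPt' : P.trace.re = p := by rw [hPt]; exact Complex.ofReal_re _
  have hNt' : N.trace.re = q := by rw [hNt]; exact Complex.ofReal_re _
  have hEA : (E * A).trace.re = a - b := by
    rw [hPN, Matrix.mul_sub, Matrix.trace_sub, Complex.sub_re]
  have hAt : A.trace.re = p - q := by
    rw [hPN, Matrix.trace_sub, Complex.sub_re, hPt', hNt']
  have hEA1 : (((1 : Matrix (Fin k) (Fin k) ℂ) - E) * A).trace.re = (p - q) - (a - b) := by
    rw [trace_one_sub_mul, Complex.sub_re, hAt, hEA]
  have ha0 : 0 ≤ a := trace_EP_nonneg hE hP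
  have hb0 : 0 ≤ b := trace_EP_nonneg hE hN
  have hap : a ≤ p := hPt' ▸ trace_EP_le hE hE1 hP
  have hbq : b ≤ q := hNt' ▸ trace_EP_le hE hE1 hN
  rw [hEA, hEA1, traceNorm_herm_eq hA]
  rcases abs_cases (a - b) with ⟨h1, _⟩ | ⟨h1, _⟩ <;>
    rcases abs_cases ((p - q) - (a - b)) with ⟨h2, _⟩ | ⟨h2, _⟩ <;> linarith

lemma trace_mul_le {A E : Matrix (Fin k) (Fin k) ℂ} (hA : A.IsHermitian) (hE : E.PosSemidef)
    (hE1 : ((1 : Matrix (Fin k) (Fin k) ℂ) - E).PosSemidef) :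
    (E * A).trace.re ≤ (traceNorm A + A.trace.re) / 2 := by
  obtain ⟨P, N, hP, hN, hPN, hPt, hNt⟩ := decomp hA
  have hEA : (E * A).trace.re = (E * P).trace.re - (E * N).trace.re := by
    rw [hPN, Matrix.mul_sub, Matrix.trace_sub, Complex.sub_re]
  have hAt : A.trace.re = P.trace.re - N.trace.re := by
    rw [hPN, Matrix.trace_sub, Complex.sub_re]
  have h1 : (E * P).trace.re ≤ P.trace.re := trace_EP_le hE hE1 hP
  have h2 : 0 ≤ (E * N).trace.re := trace_EP_nonneg hE hN
  have h3 : traceNorm A = P.trace.re + N.trace.re := by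
    rw [traceNorm_herm_eq hA, hPt, hNt, Complex.ofReal_re, Complex.ofReal_re]
  linarith

lemma exists_maximizer {A : Matrix (Fin k) (Fin k) ℂ} (hA : A.IsHermitian) :
    ∃ E : Matrix (Fin k) (Fin k) ℂ, E.PosSemidef ∧
      ((1 : Matrix (Fin k) (Fin k) ℂ) - E).PosSemidef ∧
      (E * A).trace.re = (traceNorm A + A.trace.re) / 2 := by
  set U := hA.eigenvectorUnitary
  set d := hA.eigenvalues with hd
  set ind : Fin k → ℂ := fun i => if 0 ≤ d i then 1 else 0 with hind
  refine ⟨(U : Matrix (Fin k) (Fin k) ℂ) * Matrix.diagonal ind *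
      star (U : Matrix (Fin k) (Fin k) ℂ), ?_, ?_, ?_⟩
  · refine TP.conj_psd U (Matrix.PosSemidef.diagonal fun i => ?_)
    by_cases h : 0 ≤ d i <;> simp [hind, h]
  · have hone : (1 : Matrix (Fin k) (Fin k) ℂ)
        = (U : Matrix (Fin k) (Fin k) ℂ) * Matrix.diagonal (fun _ => (1:ℂ)) *
          star (U : Matrix (Fin k) (Fin k) ℂ) := by
      rw [Matrix.diagonal_one, mul_one]
      exact (Unitary.coe_mul_star_self U).symm
    rw [hone, conj_sub, Matrix.diagonal_sub]
    refine TP.conj_psd U (Matrix.PosSemidef.diagonal fun i => ?_)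
    by_cases h : 0 ≤ d i <;> simp [hind, h]
  · have hmul : (U : Matrix (Fin k) (Fin k) ℂ) * Matrix.diagonal ind *
        star (U : Matrix (Fin k) (Fin k) ℂ) * A
        = (U : Matrix (Fin k) (Fin k) ℂ) * (Matrix.diagonal ind *
          Matrix.diagonal (RCLike.ofReal ∘ d)) * star (U : Matrix (Fin k) (Fin k) ℂ) := by
      conv_lhs => rw [hA.spectral_theorem, Unitary.conjStarAlgAut_apply]
      rw [TP.conj_mul_conj]
    rw [hmul, TP.conj_trace, Matrix.diagonal_mul_diagonal, Matrix.trace_diagonal]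
    have : ∀ i, ind i * (RCLike.ofReal ∘ d) i = ((max (d i) 0 : ℝ) : ℂ) := by
      intro i
      by_cases h : 0 ≤ d i
      · simp [hind, h, max_eq_left h]
      · simp [hind, h, max_eq_right (le_of_not_ge h)]
    have hAt : A.trace.re = ∑ i, d i := by
      rw [TPB.trace_hermitian hA, Complex.ofReal_re]
    rw [Finset.sum_congr rfl fun i _ => this i, ← Complex.ofReal_sum, Complex.ofReal_re,
      TPC.traceNorm_eq_sum_abs hA, hAt, ← Finset.sum_add_distrib, Finset.sum_div]
    refine Finset.sum_congr rfl fun i _ => ?_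
    rcases le_total (d i) 0 with h | h
    · rw [max_eq_right h, abs_of_nonpos h]; ring
    · rw [max_eq_left h, abs_of_nonneg h]; ring
end TPD
namespace TPE
variable {k : ℕ}

lemma isClosed_psd : IsClosed {M : Matrix (Fin k) (Fin k) ℂ | M.PosSemidef} := by
  have hset : {M : Matrix (Fin k) (Fin k) ℂ | M.PosSemidef}
      = {M : Matrix (Fin k) (Fin k) ℂ | Mᴴ = M} ∩
        ⋂ x : Fin k → ℂ, {M : Matrix (Fin k) (Fin k) ℂ |
          0 ≤ (star x ⬝ᵥ M *ᵥ x).re ∧ (star x ⬝ᵥ M *ᵥ x).im = 0} := by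
    ext M
    simp only [Set.mem_setOf_eq, Set.mem_inter_iff, Set.mem_iInter]
    constructor
    · intro h
      refine ⟨h.1, fun x => ?_⟩
      have := h.dotProduct_mulVec_nonneg x
      rw [Complex.le_def] at this
      exact ⟨by simpa using this.1, by simpa using this.2.symm⟩
    · intro h
      refine Matrix.PosSemidef.of_dotProduct_mulVec_nonneg h.1 fun x => ?_
      rw [Complex.le_def]
      exact ⟨by simpa using (h.2 x).1, by simpa using ((h.2 x).2).symm⟩
  rw [hset]
  refine IsClosed.inter (isClosed_eq (continuous_id.matrix_conjTranspose) continuous_id)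
    (isClosed_iInter fun x => ?_)
  have hc : Continuous fun M : Matrix (Fin k) (Fin k) ℂ => star x ⬝ᵥ M *ᵥ x :=
    continuous_const.dotProduct (continuous_id.matrix_mulVec continuous_const)
  exact IsClosed.inter (isClosed_le continuous_const (Complex.continuous_re.comp hc))
    (isClosed_eq (Complex.continuous_im.comp hc) continuous_const)

lemma diag_entry_nonneg {E : Matrix (Fin k) (Fin k) ℂ} (hE : E.PosSemidef) (i : Fin k) :
    0 ≤ E i i := by
  have := hE.dotProduct_mulVec_nonneg (Pi.single i 1)
  simpa [dotProduct, Matrix.mulVec, Pi.single_apply] using this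

lemma quad_two (M : Matrix (Fin k) (Fin k) ℂ) (i j : Fin k) (a b : ℂ) :
    star (Pi.single i a + Pi.single j b) ⬝ᵥ (M *ᵥ (Pi.single i a + Pi.single j b))
      = star a * M i i * a + star a * M i j * b + star b * M j i * a + star b * M j j * b := by
  simp only [star_add, ← Pi.single_star, Matrix.mulVec_add, Matrix.mulVec_single,
    add_dotProduct,
    dotProduct_add, single_dotProduct, Pi.smul_apply, Matrix.col_apply, op_smul_eq_mul]
  ring

lemma entry_abs_le {E : Matrix (Fin k) (Fin k) ℂ} (hE : E.PosSemidef)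
    (hE1 : ((1 : Matrix (Fin k) (Fin k) ℂ) - E).PosSemidef) (i j : Fin k) :
    ‖E i j‖ ≤ 1 := by
  have hdiag : ∀ l : Fin k, 0 ≤ (E l l).re ∧ (E l l).re ≤ 1 := by
    intro l
    have h0 := diag_entry_nonneg hE l
    have h1 := diag_entry_nonneg hE1 l
    rw [Matrix.sub_apply, Matrix.one_apply_eq] at h1
    rw [Complex.le_def] at h0 h1
    have h0' : 0 ≤ (E l l).re := by simpa using h0.1
    have h1' : (E l l).re ≤ 1 := by
      have := h1.1
      simp only [Complex.zero_re, Complex.sub_re, Complex.one_re] at this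
      linarith
    exact ⟨h0', h1'⟩
  have hq := hE.dotProduct_mulVec_nonneg (Pi.single i 1 + Pi.single j (-(star (E i j))))
  rw [quad_two] at hq
  have hji : E j i = star (E i j) := by
    conv_lhs => rw [← hE.1.eq]
    rw [Matrix.conjTranspose_apply]
  rw [hji] at hq
  set z := E i j
  set s := Complex.normSq z with hsdef
  have hexp : star (1:ℂ) * E i i * 1 + star (1:ℂ) * z * (-(star z)) +
      star (-(star z)) * star z * 1 + star (-(star z)) * E j j * (-(star z))
      = E i i - 2 * (s:ℂ) + (s:ℂ) * E j j := by
    simp only [star_one, one_mul, mul_one, star_neg, star_star]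
    have h1 : z * star z = (s : ℂ) := by
      rw [hsdef, Complex.star_def, Complex.mul_conj]
    have h2 : star z * z = (s : ℂ) := by
      rw [hsdef, Complex.star_def, mul_comm, Complex.mul_conj]
    calc E i i + z * -star z + -z * star z + -z * E j j * -star z
        = E i i - (z * star z) - (z * star z) + (z * star z) * E j j := by ring
      _ = E i i - 2 * (s:ℂ) + (s:ℂ) * E j j := by rw [h1]; ring
  rw [hexp] at hq
  have hre := (Complex.le_def.mp hq).1
  simp only [Complex.add_re, Complex.sub_re, Complex.mul_re, Complex.ofReal_re,
    Complex.ofReal_im, Complex.zero_re, Complex.re_ofNat, Complex.im_ofNat] at hre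
  have hs0 : 0 ≤ s := Complex.normSq_nonneg z
  have hii := hdiag i
  have hjj := hdiag j
  have hs1 : s ≤ 1 := by nlinarith [hre, hii.2, hjj.2, hs0]
  have habs : ‖z‖ ^ 2 = s := Complex.sq_norm z
  nlinarith [norm_nonneg z, habs, hs1]

lemma isCompact_K :
    IsCompact {E : Matrix (Fin k) (Fin k) ℂ | E.PosSemidef ∧
      ((1 : Matrix (Fin k) (Fin k) ℂ) - E).PosSemidef} := by
  have hbig : IsCompact (Set.univ.pi fun _ : Fin k =>
      Set.univ.pi fun _ : Fin k => Metric.closedBall (0:ℂ) 1) :=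
    isCompact_univ_pi fun _ => isCompact_univ_pi fun _ => isCompact_closedBall _ _
  refine IsCompact.of_isClosed_subset hbig ?_ ?_
  · exact isClosed_psd.inter (isClosed_psd.preimage (continuous_const.sub continuous_id))
  · intro E hEm
    refine Set.mem_univ_pi.mpr fun i => Set.mem_univ_pi.mpr fun j => ?_
    rw [Metric.mem_closedBall, Complex.dist_eq, sub_zero]
    exact entry_abs_le hEm.1 hEm.2 i j

end TPE
namespace TPF
variable {k : ℕ}

lemma psd_trace_zero {M : Matrix (Fin k) (Fin k) ℂ} (hM : M.PosSemidef)
    (ht : M.trace = 0) : M = 0 := by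
  have hd : ∀ i, hM.1.eigenvalues i = 0 := by
    have hsum : ∑ i, hM.1.eigenvalues i = 0 := by
      have := TPB.trace_hermitian hM.1
      rw [ht] at this
      exact_mod_cast this.symm
    exact fun i => (Finset.sum_eq_zero_iff_of_nonneg
      (fun j _ => hM.eigenvalues_nonneg j)).mp hsum i (Finset.mem_univ i)
  have : M = (hM.1.eigenvectorUnitary : Matrix (Fin k) (Fin k) ℂ) *
      Matrix.diagonal (RCLike.ofReal ∘ hM.1.eigenvalues) *
      star (hM.1.eigenvectorUnitary : Matrix (Fin k) (Fin k) ℂ) := hM.1.spectral_theorem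
  rw [this]
  have hzero : Matrix.diagonal (RCLike.ofReal ∘ hM.1.eigenvalues)
      = (0 : Matrix (Fin k) (Fin k) ℂ) := by
    have h0 : (RCLike.ofReal ∘ hM.1.eigenvalues : Fin k → ℂ) = 0 := by
      funext i
      simp [Function.comp, hd i]
    rw [h0]
    exact Matrix.diagonal_zero
  rw [hzero, mul_zero, zero_mul]

lemma ker_incl {ρ₁' ρ₂' : Matrix (Fin k) (Fin k) ℂ}
    (hρ₁' : ρ₁'.PosSemidef) (hρ₂' : ρ₂'.PosSemidef)
    (hsupp : LinearMap.range (Matrix.toLin' ρ₁') ≤ LinearMap.range (Matrix.toLin' ρ₂'))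
    (v : Fin k → ℂ) (hv : ρ₂' *ᵥ v = 0) : ρ₁' *ᵥ v = 0 := by
  have hmem : ρ₁' *ᵥ v ∈ LinearMap.range (Matrix.toLin' ρ₁') :=
    ⟨v, by rw [Matrix.toLin'_apply]⟩
  obtain ⟨w, hw⟩ := hsupp hmem
  rw [Matrix.toLin'_apply] at hw
  have hq : star v ⬝ᵥ (ρ₁' *ᵥ v) = 0 := by
    rw [← hw, Matrix.dotProduct_mulVec]
    have h1 : star v ᵥ* ρ₂' = star (ρ₂' *ᵥ v) := by
      rw [Matrix.star_mulVec, hρ₂'.1.eq]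
    rw [h1, hv, star_zero, zero_dotProduct]
  exact (hρ₁'.dotProduct_mulVec_zero_iff v).mp hq

lemma quad_reduce {M : Matrix (Fin k) (Fin k) ℂ} (hM : M.IsHermitian) (x x'' : Fin k → ℂ)
    (h0 : M *ᵥ x'' = 0) :
    star x ⬝ᵥ (M *ᵥ x) = star (x - x'') ⬝ᵥ (M *ᵥ (x - x'')) := by
  have hMx : M *ᵥ (x - x'') = M *ᵥ x := by
    rw [Matrix.mulVec_sub, h0, sub_zero]
  rw [hMx, star_sub, sub_dotProduct]
  have hz : star x'' ⬝ᵥ (M *ᵥ x) = 0 := by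
    have h1 : star x'' ᵥ* M = star (M *ᵥ x'') := by
      rw [Matrix.star_mulVec, hM.eq]
    rw [Matrix.dotProduct_mulVec, h1, h0, star_zero, zero_dotProduct]
  rw [hz, sub_zero]

lemma exists_dominating {ρ₁' ρ₂' : Matrix (Fin k) (Fin k) ℂ}
    (hρ₁' : ρ₁'.PosSemidef) (hρ₁'tr : ρ₁'.trace = 1) (hρ₂' : ρ₂'.PosSemidef)
    (hker : ∀ v, ρ₂' *ᵥ v = 0 → ρ₁' *ᵥ v = 0) :
    ∃ lam : ℝ, 0 < lam ∧ ((lam : ℂ) • ρ₂' - ρ₁').PosSemidef := by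
  rcases Nat.eq_zero_or_pos k with hk | hk
  · refine ⟨1, one_pos, Matrix.PosSemidef.of_dotProduct_mulVec_nonneg ?_ ?_⟩
    · subst hk
      funext i j
      exact i.elim0
    · intro x
      subst hk
      simp [dotProduct]
  haveI : NeZero k := ⟨by omega⟩
  set U := hρ₂'.1.eigenvectorUnitary with hU
  set e := hρ₂'.1.eigenvalues with he
  have hne : (Finset.univ : Finset (Fin k)).Nonempty := Finset.univ_nonempty
  set ε := Finset.univ.inf' hne (fun i => if e i = 0 then 1 else e i) with hε
  have hεpos : 0 < ε := by
    rw [hε, Finset.lt_inf'_iff]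
    intro i _
    by_cases h : e i = 0
    · simp [h]
    · simp only [h, if_false]
      exact lt_of_le_of_ne (hρ₂'.eigenvalues_nonneg i) (Ne.symm h)
  refine ⟨ε⁻¹, by positivity, Matrix.PosSemidef.of_dotProduct_mulVec_nonneg ?_ ?_⟩
  · rw [Matrix.IsHermitian, Matrix.conjTranspose_sub, Matrix.conjTranspose_smul,
      hρ₁'.1.eq, hρ₂'.1.eq]
    congr 1
    congr 1
    simp [Complex.star_def, Complex.conj_ofReal]
  · intro x
    set z : Fin k → ℂ := star (U : Matrix (Fin k) (Fin k) ℂ) *ᵥ x with hz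
    set z₀ : Fin k → ℂ := fun i => if e i = 0 then z i else 0 with hz₀
    set x'' : Fin k → ℂ := (U : Matrix (Fin k) (Fin k) ℂ) *ᵥ z₀ with hx''
    have hUU : star (U : Matrix (Fin k) (Fin k) ℂ) * (U : Matrix (Fin k) (Fin k) ℂ) = 1 :=
      Unitary.coe_star_mul_self U
    have hsUx'' : star (U : Matrix (Fin k) (Fin k) ℂ) *ᵥ x'' = z₀ := by
      rw [hx'', Matrix.mulVec_mulVec, hUU, Matrix.one_mulVec]
    have h2'' : ρ₂' *ᵥ x'' = 0 := by
      conv_lhs => rw [hρ₂'.1.spectral_theorem, Unitary.conjStarAlgAut_apply]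
      rw [show (U : Matrix (Fin k) (Fin k) ℂ) * Matrix.diagonal (RCLike.ofReal ∘ e) *
          star (U : Matrix (Fin k) (Fin k) ℂ)
          = (U : Matrix (Fin k) (Fin k) ℂ) * Matrix.diagonal (RCLike.ofReal ∘ e) *
          star (U : Matrix (Fin k) (Fin k) ℂ) from rfl]
      rw [← Matrix.mulVec_mulVec, hsUx'', ← Matrix.mulVec_mulVec]
      have : Matrix.diagonal (RCLike.ofReal ∘ e) *ᵥ z₀ = 0 := by
        funext i
        rw [Matrix.mulVec_diagonal]
        by_cases h : e i = 0 <;> simp [hz₀, h, Function.comp]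
      rw [this, Matrix.mulVec_zero]
    have h1'' : ρ₁' *ᵥ x'' = 0 := hker _ h2''
    set x' : Fin k → ℂ := x - x'' with hx'
    have hzx' : star (U : Matrix (Fin k) (Fin k) ℂ) *ᵥ x' = z - z₀ := by
      rw [hx', Matrix.mulVec_sub, hsUx'', hz]
    have hQ1 : star x ⬝ᵥ (ρ₁' *ᵥ x) = star x' ⬝ᵥ (ρ₁' *ᵥ x') :=
      quad_reduce hρ₁'.1 x x'' h1''
    have hQ2 : star x ⬝ᵥ (ρ₂' *ᵥ x) = star x' ⬝ᵥ (ρ₂' *ᵥ x') :=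
      quad_reduce hρ₂'.1 x x'' h2''
    set s : Fin k → ℝ := fun i => Complex.normSq ((z - z₀) i) with hs
    have hQ2' : star x' ⬝ᵥ (ρ₂' *ᵥ x') = ((∑ i, e i * s i : ℝ) : ℂ) := by
      conv_lhs => rw [hρ₂'.1.spectral_theorem, Unitary.conjStarAlgAut_apply]
      rw [TPB.quad_conj U (RCLike.ofReal ∘ e) x']
      rw [show (star (U : Matrix (Fin k) (Fin k) ℂ) *ᵥ x') = z - z₀ from hzx']
      push_cast
      rfl
    have hnorm : star x' ⬝ᵥ x' = ((∑ i, s i : ℝ) : ℂ) := by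
      rw [TPB.quad_one U x', hzx']
      push_cast
      rfl
    have hQ1le : star x' ⬝ᵥ (ρ₁' *ᵥ x') ≤ ((∑ i, s i : ℝ) : ℂ) := by
      have := TPB.quad_le_trace hρ₁' x'
      rw [hρ₁'tr, one_mul, hnorm] at this
      exact this
    have hreal : ∑ i, s i ≤ ε⁻¹ * ∑ i, e i * s i := by
      rw [Finset.mul_sum]
      refine Finset.sum_le_sum fun i _ => ?_
      by_cases h : e i = 0
      · have hz1 : (z - z₀) i = 0 := by simp [hz₀, h]
        have : s i = 0 := by rw [hs]; simp only []; rw [hz1]; exact Complex.normSq_zero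
        rw [this, h]
        simp
      · have hεe : ε ≤ e i := by
          have := Finset.inf'_le (fun i => if e i = 0 then 1 else e i) (Finset.mem_univ i)
          rwa [if_neg h] at this
        have hs0 : 0 ≤ s i := Complex.normSq_nonneg _
        have h1 : 1 ≤ ε⁻¹ * e i := by
          rw [inv_mul_eq_div, le_div_iff₀ hεpos]
          linarith
        have h2 := mul_le_mul_of_nonneg_left h1 hs0
        rw [mul_one] at h2
        calc s i ≤ s i * (ε⁻¹ * e i) := h2
          _ = ε⁻¹ * (e i * s i) := by ring
    calc (0 : ℂ) ≤ ((ε⁻¹ * ∑ i, e i * s i - ∑ i, s i : ℝ) : ℂ) := by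
          rw [Complex.zero_le_real]
          linarith
      _ = ((ε⁻¹ : ℝ) : ℂ) * ((∑ i, e i * s i : ℝ) : ℂ) - ((∑ i, s i : ℝ) : ℂ) := by
          push_cast
          ring
      _ ≤ ((ε⁻¹ : ℝ) : ℂ) * ((∑ i, e i * s i : ℝ) : ℂ) - star x ⬝ᵥ (ρ₁' *ᵥ x) := by
          refine sub_le_sub_left ?_ _
          rw [hQ1]
          exact hQ1le
      _ = star x ⬝ᵥ (((ε⁻¹ : ℝ) : ℂ) • ρ₂' - ρ₁') *ᵥ x := by
          rw [Matrix.sub_mulVec, dotProduct_sub, Matrix.smul_mulVec,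
            dotProduct_smul, smul_eq_mul, hQ2, hQ2']

end TPF




namespace TPG
variable {k : ℕ}

lemma ratio_facts {ρ₁' ρ₂' : Matrix (Fin k) (Fin k) ℂ}
    (hρ₁' : ρ₁'.PosSemidef) (hρ₁'tr : ρ₁'.trace = 1)
    (hρ₂' : ρ₂'.PosSemidef) (hρ₂'tr : ρ₂'.trace = 1)
    (hne : ρ₁' ≠ ρ₂')
    (hdom : ∃ lam : ℝ, 0 < lam ∧ ((lam : ℂ) • ρ₂' - ρ₁').PosSemidef) :
    (((supRatio ρ₁' ρ₂' : ℝ) : ℂ) • ρ₂' - ρ₁').PosSemidef ∧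
    (ρ₁' - ((infRatio ρ₁' ρ₂' : ℝ) : ℂ) • ρ₂').PosSemidef ∧
    0 ≤ infRatio ρ₁' ρ₂' ∧ infRatio ρ₁' ρ₂' < 1 ∧ 1 < supRatio ρ₁' ρ₂' ∧
    (∀ lam : ℝ, ((lam : ℂ) • ρ₂' - ρ₁').PosSemidef → supRatio ρ₁' ρ₂' ≤ lam) ∧
    (∀ lam : ℝ, (ρ₁' - (lam : ℂ) • ρ₂').PosSemidef → lam ≤ infRatio ρ₁' ρ₂') := by
  set SM : Set ℝ := { lam : ℝ | ((lam : ℂ) • ρ₂' - ρ₁').PosSemidef } with hSM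
  set Sm : Set ℝ := { lam : ℝ | (ρ₁' - (lam : ℂ) • ρ₂').PosSemidef } with hSm
  have htrSM : ∀ lam : ℝ, lam ∈ SM → 1 ≤ lam := by
    intro lam hlam
    have h := TP.trace_nonneg hlam
    rw [Matrix.trace_sub, Matrix.trace_smul, hρ₂'tr, hρ₁'tr, smul_eq_mul, mul_one] at h
    have := (Complex.le_def.mp h).1
    simp only [Complex.zero_re, Complex.sub_re, Complex.ofReal_re, Complex.one_re] at this
    linarith
  have htrSm : ∀ lam : ℝ, lam ∈ Sm → lam ≤ 1 := by
    intro lam hlam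
    have h := TP.trace_nonneg hlam
    rw [Matrix.trace_sub, Matrix.trace_smul, hρ₂'tr, hρ₁'tr, smul_eq_mul, mul_one] at h
    have := (Complex.le_def.mp h).1
    simp only [Complex.zero_re, Complex.sub_re, Complex.ofReal_re, Complex.one_re] at this
    linarith
  have hSMclosed : IsClosed SM := by
    have hcont : Continuous fun lam : ℝ => ((lam : ℂ) • ρ₂' - ρ₁') :=
      (Complex.continuous_ofReal.smul continuous_const).sub continuous_const
    exact TPE.isClosed_psd.preimage hcont
  have hSmclosed : IsClosed Sm := by
    have hcont : Continuous fun lam : ℝ => (ρ₁' - (lam : ℂ) • ρ₂') :=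
      continuous_const.sub (Complex.continuous_ofReal.smul continuous_const)
    exact TPE.isClosed_psd.preimage hcont
  have hSMne : SM.Nonempty := by
    obtain ⟨lam, _, hlam⟩ := hdom
    exact ⟨lam, hlam⟩
  have h0mem : (0:ℝ) ∈ Sm := by
    show (ρ₁' - ((0:ℝ) : ℂ) • ρ₂').PosSemidef
    rw [Complex.ofReal_zero, zero_smul, sub_zero]
    exact hρ₁'
  have hSmne : Sm.Nonempty := ⟨0, h0mem⟩
  have hSMbdd : BddBelow SM := ⟨1, fun lam hlam => htrSM lam hlam⟩
  have hSmbdd : BddAbove Sm := ⟨1, fun lam hlam => htrSm lam hlam⟩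
  have hMmem : supRatio ρ₁' ρ₂' ∈ SM := by
    rw [supRatio]
    exact IsClosed.csInf_mem hSMclosed hSMne hSMbdd
  have hmmem : infRatio ρ₁' ρ₂' ∈ Sm := by
    rw [infRatio]
    exact IsClosed.csSup_mem hSmclosed hSmne hSmbdd
  have hM1 : 1 ≤ supRatio ρ₁' ρ₂' := htrSM _ hMmem
  have hm1 : infRatio ρ₁' ρ₂' ≤ 1 := htrSm _ hmmem
  have hm0 : 0 ≤ infRatio ρ₁' ρ₂' := by
    rw [infRatio]
    exact le_csSup hSmbdd h0mem
  have hMne : supRatio ρ₁' ρ₂' ≠ 1 := by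
    intro h
    have hmem := hMmem
    rw [h] at hmem
    have hpsd : (((1:ℝ):ℂ) • ρ₂' - ρ₁').PosSemidef := hmem
    rw [Complex.ofReal_one, one_smul] at hpsd
    have htr : (ρ₂' - ρ₁').trace = 0 := by
      rw [Matrix.trace_sub, hρ₂'tr, hρ₁'tr, sub_self]
    have := TPF.psd_trace_zero hpsd htr
    exact hne (sub_eq_zero.mp this).symm
  have hmne : infRatio ρ₁' ρ₂' ≠ 1 := by
    intro h
    have hmem := hmmem
    rw [h] at hmem
    have hpsd : (ρ₁' - ((1:ℝ):ℂ) • ρ₂').PosSemidef := hmem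
    rw [Complex.ofReal_one, one_smul] at hpsd
    have htr : (ρ₁' - ρ₂').trace = 0 := by
      rw [Matrix.trace_sub, hρ₂'tr, hρ₁'tr, sub_self]
    have := TPF.psd_trace_zero hpsd htr
    exact hne (sub_eq_zero.mp this)
  exact ⟨hMmem, hmmem, hm0, lt_of_le_of_ne hm1 hmne, lt_of_le_of_ne hM1 (Ne.symm hMne),
    fun lam hlam => csInf_le hSMbdd hlam, fun lam hlam => le_csSup hSmbdd hlam⟩

lemma abs_sub_le' (a b : ℝ) : |a - b| ≤ |a| + |b| := by
  rw [sub_eq_add_neg]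
  exact (abs_add_le _ _).trans (by rw [abs_neg])

lemma key_real {M' m' t x y p₀ q₀ : ℝ} (hm0 : 0 ≤ m') (hm1 : m' < 1) (hM1 : 1 < M')
    (hq₀ : q₀ = (1 - m') / (M' - m')) (hp₀ : p₀ = M' * q₀)
    (hC1 : M' * y ≤ x) (hC2 : 1 - m' ≤ x - m' * y) :
    |p₀ - t * q₀| + |(1 - p₀) - t * (1 - q₀)| ≤ |x - t * y| + |(1 - x) - t * (1 - y)| := by
  have hMm : 0 < M' - m' := by linarith
  have hq1 : q₀ * (M' - m') = 1 - m' := by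
    rw [hq₀]
    field_simp
  have hq0pos : 0 < q₀ := by
    rw [hq₀]
    apply div_pos <;> linarith
  have hq0lt1 : q₀ < 1 := by nlinarith
  have h1p : 1 - p₀ = m' * (1 - q₀) := by nlinarith
  have hsum : (x - t * y) + ((1 - x) - t * (1 - y)) = 1 - t := by ring
  rcases le_total t m' with h | h
  · have hv0 : 0 ≤ p₀ - t * q₀ := by nlinarith
    have hv1 : 0 ≤ (1 - p₀) - t * (1 - q₀) := by nlinarith
    rw [abs_of_nonneg hv0, abs_of_nonneg hv1]
    calc p₀ - t * q₀ + ((1 - p₀) - t * (1 - q₀)) = 1 - t := by ring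
      _ ≤ |1 - t| := le_abs_self _
      _ = |(x - t * y) + ((1 - x) - t * (1 - y))| := by rw [hsum]
      _ ≤ _ := abs_add_le _ _
  · rcases le_total M' t with h2 | h2
    · have hv0 : p₀ - t * q₀ ≤ 0 := by nlinarith
      have hv1 : (1 - p₀) - t * (1 - q₀) ≤ 0 := by nlinarith
      rw [abs_of_nonpos hv0, abs_of_nonpos hv1]
      calc -(p₀ - t * q₀) + -((1 - p₀) - t * (1 - q₀)) = -(1 - t) := by ring
        _ ≤ |1 - t| := neg_le_abs _
        _ = |(x - t * y) + ((1 - x) - t * (1 - y))| := by rw [hsum]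
        _ ≤ _ := abs_add_le _ _
    · have hv0 : 0 ≤ p₀ - t * q₀ := by nlinarith
      have hv1 : (1 - p₀) - t * (1 - q₀) ≤ 0 := by nlinarith
      have hinterp : p₀ - t * q₀ ≤ x - t * y := by
        nlinarith [mul_nonneg (by linarith : (0:ℝ) ≤ M' - t)
            (by linarith : (0:ℝ) ≤ x - m' * y - (1 - m')),
          mul_nonneg (by linarith : (0:ℝ) ≤ t - m') (by linarith : (0:ℝ) ≤ x - M' * y)]
      rw [abs_of_nonneg hv0, abs_of_nonpos hv1]
      calc p₀ - t * q₀ + -((1 - p₀) - t * (1 - q₀))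
          = 2 * (p₀ - t * q₀) - (1 - t) := by ring
        _ ≤ 2 * (x - t * y) - (1 - t) := by linarith
        _ = (x - t * y) - ((1 - x) - t * (1 - y)) := by ring
        _ ≤ |(x - t * y) - ((1 - x) - t * (1 - y))| := le_abs_self _
        _ ≤ _ := abs_sub_le' _ _

end TPG
namespace TPH
variable {k : ℕ}

lemma sigma_diff (M' m' t : ℝ) :
    (Matrix.diagonal ![((M' * (1 - m') / (M' - m') : ℝ) : ℂ), ((m' * (M' - 1) / (M' - m') : ℝ) : ℂ)]
      - (t : ℂ) • Matrix.diagonal ![(((1 - m') / (M' - m') : ℝ) : ℂ), (((M' - 1) / (M' - m') : ℝ) : ℂ)])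
      = Matrix.diagonal ![((M' * (1 - m') / (M' - m') - t * ((1 - m') / (M' - m')) : ℝ) : ℂ),
          ((m' * (M' - 1) / (M' - m') - t * ((M' - 1) / (M' - m')) : ℝ) : ℂ)] := by
  ext i j
  fin_cases i <;> fin_cases j <;>
    simp [Matrix.diagonal_apply, Matrix.sub_apply, Matrix.smul_apply] <;> push_cast <;> ring

end TPH


set_option maxHeartbeats 3000000 in
/-- Theorem 4 of the paper: with `M' = sup(ρ₁'/ρ₂')`, `m' = inf(ρ₁'/ρ₂')` and the
two-dimensional diagonal density matrices
`σ₁ = diag(M'(1-m'), m'(M'-1))/(M'-m')`, `σ₂ = diag(1-m', M'-1)/(M'-m')`,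
a test-and-prepare channel `ℰ(ρ) = Tr[Eρ]ξ₁ + Tr[(𝟙-E)ρ]ξ₂` with `ℰ(ρ₁) = ρ₁'` and
`ℰ(ρ₂) = ρ₂'` exists if and only if `‖ρ₁ - tρ₂‖₁ ≥ ‖σ₁ - tσ₂‖₁` for all `t ≥ 0`. -/
theorem test_and_prepare_iff_lorenz
    {n m : ℕ} (ρ₁ ρ₂ : Matrix (Fin n) (Fin n) ℂ) (ρ₁' ρ₂' : Matrix (Fin m) (Fin m) ℂ)
    (hρ₁ : ρ₁.PosSemidef) (hρ₁tr : ρ₁.trace = 1)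
    (hρ₂ : ρ₂.PosSemidef) (hρ₂tr : ρ₂.trace = 1)
    (hρ₁' : ρ₁'.PosSemidef) (hρ₁'tr : ρ₁'.trace = 1)
    (hρ₂' : ρ₂'.PosSemidef) (hρ₂'tr : ρ₂'.trace = 1)
    (hne : ρ₁' ≠ ρ₂')
    (hsupp : LinearMap.range (Matrix.toLin' ρ₁') ≤ LinearMap.range (Matrix.toLin' ρ₂'))
    (M' m' : ℝ) (hM' : M' = supRatio ρ₁' ρ₂') (hm' : m' = infRatio ρ₁' ρ₂')
    (σ₁ σ₂ : Matrix (Fin 2) (Fin 2) ℂ)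
    (hσ₁ : σ₁ = Matrix.diagonal
      ![((M' * (1 - m') / (M' - m') : ℝ) : ℂ), ((m' * (M' - 1) / (M' - m') : ℝ) : ℂ)])
    (hσ₂ : σ₂ = Matrix.diagonal
      ![(((1 - m') / (M' - m') : ℝ) : ℂ), (((M' - 1) / (M' - m') : ℝ) : ℂ)]) :
    (∃ (E : Matrix (Fin n) (Fin n) ℂ) (ξ₁ ξ₂ : Matrix (Fin m) (Fin m) ℂ),
        E.PosSemidef ∧ ((1 : Matrix (Fin n) (Fin n) ℂ) - E).PosSemidef ∧
        ξ₁.PosSemidef ∧ ξ₁.trace = 1 ∧ ξ₂.PosSemidef ∧ ξ₂.trace = 1 ∧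
        (E * ρ₁).trace • ξ₁ + (((1 : Matrix (Fin n) (Fin n) ℂ) - E) * ρ₁).trace • ξ₂ = ρ₁' ∧
        (E * ρ₂).trace • ξ₁ + (((1 : Matrix (Fin n) (Fin n) ℂ) - E) * ρ₂).trace • ξ₂ = ρ₂') ↔
      (∀ t : ℝ, 0 ≤ t →
        traceNorm (σ₁ - (t : ℂ) • σ₂) ≤ traceNorm (ρ₁ - (t : ℂ) • ρ₂)) := by
  classical
  -- basic facts about the ratios
  have hker := fun v hv => TPF.ker_incl hρ₁' hρ₂' hsupp v hv
  have hdom := TPF.exists_dominating hρ₁' hρ₁'tr hρ₂' hker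
  have hfacts := TPG.ratio_facts hρ₁' hρ₁'tr hρ₂' hρ₂'tr hne hdom
  rw [← hM', ← hm'] at hfacts
  obtain ⟨hMmem, hmmem, hm0, hm1, hM1, hMle, hmge⟩ := hfacts
  have hMm : (0:ℝ) < M' - m' := by linarith
  set q₀ : ℝ := (1 - m') / (M' - m') with hq₀def
  set p₀ : ℝ := M' * (1 - m') / (M' - m') with hp₀def
  have hp₀eq : p₀ = M' * q₀ := by rw [hp₀def, hq₀def, mul_div_assoc]
  have hq1 : q₀ * (M' - m') = 1 - m' := by rw [hq₀def]; field_simp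
  have hid1 : m' * (M' - 1) / (M' - m') = 1 - p₀ := by
    rw [hp₀def]; field_simp; ring
  have hid2 : (M' - 1) / (M' - m') = 1 - q₀ := by
    rw [hq₀def]; field_simp; ring
  have hσd : ∀ t : ℝ, traceNorm (σ₁ - (t:ℂ) • σ₂)
      = |p₀ - t * q₀| + |(1 - p₀) - t * (1 - q₀)| := by
    intro t
    rw [hσ₁, hσ₂, TPH.sigma_diff M' m' t, TPC.traceNorm_diag2,
      show M' * (1 - m') / (M' - m') - t * ((1 - m') / (M' - m')) = p₀ - t * q₀ from by
        rw [hp₀def, hq₀def],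
      show m' * (M' - 1) / (M' - m') - t * ((M' - 1) / (M' - m'))
          = (1 - p₀) - t * (1 - q₀) from by rw [hid1, hid2]]
  have traceRe : ∀ (F ρ : Matrix (Fin n) (Fin n) ℂ), F.PosSemidef →
      ((1 : Matrix (Fin n) (Fin n) ℂ) - F).PosSemidef → ρ.PosSemidef → ρ.trace = 1 →
      (F * ρ).trace = (((F * ρ).trace.re : ℝ) : ℂ) ∧ 0 ≤ (F * ρ).trace.re ∧
        (F * ρ).trace.re ≤ 1 := by
    intro F ρ hF hF1 hρ hρtr
    refine ⟨TP.trace_mul_real hF.1 hρ.1, TPD.trace_EP_nonneg hF hρ, ?_⟩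
    have := TPD.trace_EP_le hF hF1 hρ
    rw [hρtr] at this
    simpa using this
  have hherm : ∀ t : ℝ, (ρ₁ - (t:ℂ) • ρ₂).IsHermitian := by
    intro t
    rw [Matrix.IsHermitian, Matrix.conjTranspose_sub, Matrix.conjTranspose_smul,
      hρ₁.1.eq, hρ₂.1.eq]
    congr 1
    congr 1
    simp [Complex.star_def, Complex.conj_ofReal]
  have hFt : ∀ (F : Matrix (Fin n) (Fin n) ℂ) (t : ℝ),
      (F * (ρ₁ - (t:ℂ) • ρ₂)).trace.re = (F * ρ₁).trace.re - t * (F * ρ₂).trace.re := by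
    intro F t
    rw [Matrix.mul_sub, Matrix.trace_sub, Complex.sub_re, Matrix.mul_smul,
      Matrix.trace_smul, smul_eq_mul, Complex.mul_re]
    simp
  have htrt : ∀ t : ℝ, (ρ₁ - (t:ℂ) • ρ₂).trace.re = 1 - t := by
    intro t
    rw [Matrix.trace_sub, Matrix.trace_smul, hρ₁tr, hρ₂tr, smul_eq_mul, mul_one,
      Complex.sub_re, Complex.one_re, Complex.ofReal_re]
  have hF1t : ∀ (F : Matrix (Fin n) (Fin n) ℂ) (t : ℝ),
      (((1 : Matrix (Fin n) (Fin n) ℂ) - F) * (ρ₁ - (t:ℂ) • ρ₂)).trace.re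
        = (1 - (F * ρ₁).trace.re) - t * (1 - (F * ρ₂).trace.re) := by
    intro F t
    rw [TPD.trace_one_sub_mul, Complex.sub_re, hFt F t, htrt t]
    ring
  have key : ∀ (F : Matrix (Fin n) (Fin n) ℂ) (η₁ η₂ : Matrix (Fin m) (Fin m) ℂ),
      F.PosSemidef → ((1 : Matrix (Fin n) (Fin n) ℂ) - F).PosSemidef →
      η₁.PosSemidef → η₂.PosSemidef →
      ((F * ρ₁).trace • η₁ + (((1 : Matrix (Fin n) (Fin n) ℂ) - F) * ρ₁).trace • η₂ = ρ₁') →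
      ((F * ρ₂).trace • η₁ + (((1 : Matrix (Fin n) (Fin n) ℂ) - F) * ρ₂).trace • η₂ = ρ₂') →
      (F * ρ₂).trace.re < (F * ρ₁).trace.re →
      M' * (F * ρ₂).trace.re ≤ (F * ρ₁).trace.re ∧
        1 - m' ≤ (F * ρ₁).trace.re - m' * (F * ρ₂).trace.re := by
    intro F η₁ η₂ hF hF1 hη₁ hη₂ heqA heqB hyx
    obtain ⟨cx, hx0, hx1⟩ := traceRe F ρ₁ hF hF1 hρ₁ hρ₁tr
    obtain ⟨cy, hy0, hy1⟩ := traceRe F ρ₂ hF hF1 hρ₂ hρ₂tr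
    set x := (F * ρ₁).trace.re with hxdef
    set y := (F * ρ₂).trace.re with hydef
    rw [TPD.trace_one_sub_mul, hρ₁tr, cx] at heqA
    rw [TPD.trace_one_sub_mul, hρ₂tr, cy] at heqB
    have h2 : ((x - y : ℝ) : ℂ) • η₂ = ((x:ℝ):ℂ) • ρ₂' - ((y:ℝ):ℂ) • ρ₁' := by
      rw [← heqA, ← heqB]
      push_cast
      module
    have h3 : ((x - y : ℝ) : ℂ) • η₁ = ((1 - y : ℝ):ℂ) • ρ₁' - ((1 - x : ℝ):ℂ) • ρ₂' := by
      rw [← heqA, ← heqB]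
      push_cast
      module
    have hxy0 : (0:ℝ) ≤ x - y := by linarith
    have hpsd2 : (((x:ℝ):ℂ) • ρ₂' - ((y:ℝ):ℂ) • ρ₁').PosSemidef := by
      rw [← h2]; exact TP.smul_psd hxy0 hη₂
    have hpsd1 : (((1 - y : ℝ):ℂ) • ρ₁' - ((1 - x : ℝ):ℂ) • ρ₂').PosSemidef := by
      rw [← h3]; exact TP.smul_psd hxy0 hη₁
    constructor
    · rcases eq_or_lt_of_le hy0 with hy | hy
      · rw [← hy, mul_zero]
        exact hx0
      · have hyc : ((y:ℝ):ℂ) ≠ 0 := Complex.ofReal_ne_zero.mpr (ne_of_gt hy)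
        have hmem : ((((x/y : ℝ)):ℂ) • ρ₂' - ρ₁').PosSemidef := by
          have hps := TP.smul_psd (le_of_lt (inv_pos.mpr hy)) hpsd2
          have heq : ((y⁻¹:ℝ):ℂ) • (((x:ℝ):ℂ) • ρ₂' - ((y:ℝ):ℂ) • ρ₁')
              = (((x/y : ℝ)):ℂ) • ρ₂' - ρ₁' := by
            rw [smul_sub, smul_smul, smul_smul]
            push_cast
            rw [inv_mul_cancel₀ hyc, one_smul]
            congr 2
            rw [div_eq_inv_mul]
          rwa [heq] at hps
        have := hMle (x/y) hmem
        rw [le_div_iff₀ hy] at this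
        linarith
    · have hylt1 : y < 1 := lt_of_lt_of_le hyx hx1
      have h1y : (0:ℝ) < 1 - y := by linarith
      have h1yc : ((1 - y : ℝ):ℂ) ≠ 0 := Complex.ofReal_ne_zero.mpr (ne_of_gt h1y)
      have hmem : (ρ₁' - (((1-x)/(1-y) : ℝ):ℂ) • ρ₂').PosSemidef := by
        have hps := TP.smul_psd (le_of_lt (inv_pos.mpr h1y)) hpsd1
        have heq : (((1-y)⁻¹:ℝ):ℂ) • (((1 - y : ℝ):ℂ) • ρ₁' - ((1 - x : ℝ):ℂ) • ρ₂')
            = ρ₁' - (((1-x)/(1-y) : ℝ):ℂ) • ρ₂' := by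
          rw [smul_sub, smul_smul, smul_smul]
          push_cast
          rw [inv_mul_cancel₀ (by push_cast at h1yc ⊢; exact h1yc), one_smul]
          congr 2
          rw [div_eq_inv_mul]
        rwa [heq] at hps
      have := hmge ((1-x)/(1-y)) hmem
      rw [div_le_iff₀ h1y] at this
      nlinarith [hm0, hy0]
  constructor
  · rintro ⟨E, ξ₁, ξ₂, hE, hE1, hξ₁, hξ₁tr, hξ₂, hξ₂tr, heq1, heq2⟩
    have hKcond : ∃ F : Matrix (Fin n) (Fin n) ℂ, F.PosSemidef ∧
        ((1 : Matrix (Fin n) (Fin n) ℂ) - F).PosSemidef ∧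
        M' * (F * ρ₂).trace.re ≤ (F * ρ₁).trace.re ∧
        1 - m' ≤ (F * ρ₁).trace.re - m' * (F * ρ₂).trace.re := by
      rcases lt_trichotomy ((E * ρ₂).trace.re) ((E * ρ₁).trace.re) with hlt | heq | hgt
      · obtain ⟨hA, hB⟩ := key E ξ₁ ξ₂ hE hE1 hξ₁ hξ₂ heq1 heq2 hlt
        exact ⟨E, hE, hE1, hA, hB⟩
      · exfalso
        obtain ⟨cx, _, _⟩ := traceRe E ρ₁ hE hE1 hρ₁ hρ₁tr
        obtain ⟨cy, _, _⟩ := traceRe E ρ₂ hE hE1 hρ₂ hρ₂tr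
        apply hne
        rw [← heq1, ← heq2, TPD.trace_one_sub_mul, TPD.trace_one_sub_mul, hρ₁tr, hρ₂tr,
          cx, cy, heq]
      · have h11 : (1 : Matrix (Fin n) (Fin n) ℂ) - (1 - E) = E := sub_sub_cancel 1 E
        have hE' : ((1 : Matrix (Fin n) (Fin n) ℂ) - (1 - E)).PosSemidef := by
          rw [h11]; exact hE
        have heq1' : ((1-E) * ρ₁).trace • ξ₂ +
            (((1 : Matrix (Fin n) (Fin n) ℂ) - (1-E)) * ρ₁).trace • ξ₁ = ρ₁' := by
          rw [h11, add_comm]; exact heq1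
        have heq2' : ((1-E) * ρ₂).trace • ξ₂ +
            (((1 : Matrix (Fin n) (Fin n) ℂ) - (1-E)) * ρ₂).trace • ξ₁ = ρ₂' := by
          rw [h11, add_comm]; exact heq2
        have hlt' : ((1-E) * ρ₂).trace.re < ((1-E) * ρ₁).trace.re := by
          rw [TPD.trace_one_sub_mul, TPD.trace_one_sub_mul, hρ₁tr, hρ₂tr,
            Complex.sub_re, Complex.sub_re, Complex.one_re]
          linarith
        obtain ⟨hA, hB⟩ := key (1-E) ξ₂ ξ₁ hE1 hE' hξ₂ hξ₁ heq1' heq2' hlt'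
        exact ⟨1-E, hE1, hE', hA, hB⟩
    obtain ⟨F, hF, hF1, hC1, hC2⟩ := hKcond
    intro t ht
    rw [hσd t]
    have habs := TPD.abs_bound (hherm t) hF hF1
    rw [hFt F t, hF1t F t] at habs
    exact le_trans (TPG.key_real hm0 hm1 hM1 hq₀def hp₀eq hC1 hC2) habs
  · intro hineq
    have hTC : ∃ F : Matrix (Fin n) (Fin n) ℂ, (F.PosSemidef ∧
        ((1 : Matrix (Fin n) (Fin n) ℂ) - F).PosSemidef) ∧
        M' * (F * ρ₂).trace.re ≤ (F * ρ₁).trace.re ∧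
        1 - m' ≤ (F * ρ₁).trace.re - m' * (F * ρ₂).trace.re := by
      by_contra hcon
      set T : Set (ℝ × ℝ) := (fun F : Matrix (Fin n) (Fin n) ℂ =>
        ((F * ρ₁).trace.re, (F * ρ₂).trace.re)) '' {F : Matrix (Fin n) (Fin n) ℂ |
          F.PosSemidef ∧ ((1 : Matrix (Fin n) (Fin n) ℂ) - F).PosSemidef} with hTdef
      set C : Set (ℝ × ℝ) := {p : ℝ × ℝ | M' * p.2 ≤ p.1 ∧ 1 - m' ≤ p.1 - m' * p.2}
        with hCdef
      have hdisj : Disjoint T C := by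
        rw [Set.disjoint_left]
        rintro p ⟨F, hFK, rfl⟩ hpC
        exact hcon ⟨F, hFK, hpC.1, hpC.2⟩
      have hcont : Continuous (fun F : Matrix (Fin n) (Fin n) ℂ =>
          ((F * ρ₁).trace.re, (F * ρ₂).trace.re)) := by
        refine Continuous.prodMk ?_ ?_ <;>
          exact Complex.continuous_re.comp
            ((continuous_id.matrix_mul continuous_const).matrix_trace)
      have hTcomp : IsCompact T := TPE.isCompact_K.image hcont
      have hTconv : Convex ℝ T := by
        rintro p ⟨F, hFK, rfl⟩ q ⟨G, hGK, rfl⟩ a b ha hb hab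
        have hab' : ((a:ℝ):ℂ) + ((b:ℝ):ℂ) = 1 := by
          rw [← Complex.ofReal_add, hab, Complex.ofReal_one]
        have htr : ∀ ρ : Matrix (Fin n) (Fin n) ℂ,
            (((((a:ℝ):ℂ) • F + ((b:ℝ):ℂ) • G) * ρ).trace).re
              = a * (F * ρ).trace.re + b * (G * ρ).trace.re := by
          intro ρ
          rw [Matrix.add_mul, Matrix.trace_add, Matrix.smul_mul, Matrix.smul_mul,
            Matrix.trace_smul, Matrix.trace_smul, Complex.add_re, smul_eq_mul, smul_eq_mul,
            Complex.mul_re, Complex.mul_re]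
          simp
        refine ⟨((a:ℝ):ℂ) • F + ((b:ℝ):ℂ) • G, ⟨?_, ?_⟩, ?_⟩
        · exact (TP.smul_psd ha hFK.1).add (TP.smul_psd hb hGK.1)
        · have hone : (1 : Matrix (Fin n) (Fin n) ℂ) - (((a:ℝ):ℂ) • F + ((b:ℝ):ℂ) • G)
              = ((a:ℝ):ℂ) • ((1 : Matrix (Fin n) (Fin n) ℂ) - F) +
                ((b:ℝ):ℂ) • ((1 : Matrix (Fin n) (Fin n) ℂ) - G) := by
            conv_lhs => rw [show (1 : Matrix (Fin n) (Fin n) ℂ)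
              = (((a:ℝ):ℂ) + ((b:ℝ):ℂ)) • (1 : Matrix (Fin n) (Fin n) ℂ) from by
                rw [hab', one_smul]]
            module
          rw [hone]
          exact (TP.smul_psd ha hFK.2).add (TP.smul_psd hb hGK.2)
        · simp only [Prod.ext_iff, Prod.smul_fst, Prod.smul_snd, Prod.fst_add, Prod.snd_add,
            smul_eq_mul]
          exact ⟨htr ρ₁, htr ρ₂⟩
      have hCconv : Convex ℝ C := by
        rintro p hp q hq a b ha hb hab
        simp only [hCdef, Set.mem_setOf_eq] at hp hq ⊢
        simp only [Prod.fst_add, Prod.snd_add, Prod.smul_fst, Prod.smul_snd, smul_eq_mul]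
        constructor
        · nlinarith [mul_le_mul_of_nonneg_left hp.1 ha, mul_le_mul_of_nonneg_left hq.1 hb]
        · nlinarith [mul_le_mul_of_nonneg_left hp.2 ha, mul_le_mul_of_nonneg_left hq.2 hb]
      have hCclosed : IsClosed C := by
        have : C = {p : ℝ × ℝ | M' * p.2 ≤ p.1} ∩ {p : ℝ × ℝ | 1 - m' ≤ p.1 - m' * p.2} := rfl
        rw [this]
        exact (isClosed_le (continuous_const.mul continuous_snd) continuous_fst).inter
          (isClosed_le continuous_const
            (continuous_fst.sub (continuous_const.mul continuous_snd)))
      obtain ⟨f, u, v, hfu, huv, hfv⟩ :=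
        geometric_hahn_banach_compact_closed hTconv hTcomp hCconv hCclosed hdisj
      set a := f (1, 0) with hadef
      set b := f (0, 1) with hbdef
      have hf : ∀ p : ℝ × ℝ, f p = p.1 * a + p.2 * b := by
        intro p
        have hsplit : p = p.1 • ((1:ℝ), (0:ℝ)) + p.2 • ((0:ℝ), (1:ℝ)) := by
          ext <;> simp
        conv_lhs => rw [hsplit]
        rw [map_add, f.map_smul, f.map_smul, smul_eq_mul, smul_eq_mul]
      have hw₀C : ((p₀, q₀) : ℝ × ℝ) ∈ C := by
        refine ⟨le_of_eq hp₀eq.symm, ?_⟩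
        show 1 - m' ≤ p₀ - m' * q₀
        nlinarith [hq1, hp₀eq]
      have hray1 : ∀ α : ℝ, 0 ≤ α → ((p₀ + α * M', q₀ + α) : ℝ × ℝ) ∈ C := by
        intro α hα
        constructor
        · show M' * (q₀ + α) ≤ p₀ + α * M'
          nlinarith [hp₀eq]
        · show 1 - m' ≤ (p₀ + α * M') - m' * (q₀ + α)
          have h2 : 1 - m' ≤ p₀ - m' * q₀ := hw₀C.2
          nlinarith [mul_nonneg hα (by linarith : (0:ℝ) ≤ M' - m')]
      have hray2 : ∀ α : ℝ, 0 ≤ α → ((p₀ - α * m', q₀ - α) : ℝ × ℝ) ∈ C := by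
        intro α hα
        constructor
        · show M' * (q₀ - α) ≤ p₀ - α * m'
          have h2 : M' * q₀ ≤ p₀ := le_of_eq hp₀eq.symm
          nlinarith [mul_nonneg hα (by linarith : (0:ℝ) ≤ M' - m')]
        · show 1 - m' ≤ (p₀ - α * m') - m' * (q₀ - α)
          have h2 : 1 - m' ≤ p₀ - m' * q₀ := hw₀C.2
          nlinarith
      have hfw := hfv _ hw₀C
      rw [hf] at hfw
      have hdir1 : 0 ≤ M' * a + b := by
        by_contra hneg
        push_neg at hneg
        set α := (p₀ * a + q₀ * b - v) / (-(M' * a + b)) with hα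
        have hαpos : 0 ≤ α := le_of_lt (div_pos (by linarith) (by linarith))
        have hv2 := hfv _ (hray1 α hαpos)
        rw [hf] at hv2
        have hcalc : (p₀ + α * M') * a + (q₀ + α) * b
            = p₀ * a + q₀ * b + α * (M' * a + b) := by ring
        have hne0 : M' * a + b ≠ 0 := ne_of_lt hneg
        have hαval : α * (M' * a + b) = -(p₀ * a + q₀ * b - v) := by
          rw [hα]
          field_simp
          rw [mul_div_assoc, div_self (by rw [mul_comm a]; exact hne0), mul_one]
        rw [hcalc, hαval] at hv2
        linarith
      have hdir2 : m' * a + b ≤ 0 := by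
        by_contra hneg
        push_neg at hneg
        set α := (p₀ * a + q₀ * b - v) / (m' * a + b) with hα
        have hαpos : 0 ≤ α := le_of_lt (div_pos (by linarith) (by linarith))
        have hv2 := hfv _ (hray2 α hαpos)
        rw [hf] at hv2
        have hcalc : (p₀ - α * m') * a + (q₀ - α) * b
            = p₀ * a + q₀ * b - α * (m' * a + b) := by ring
        have hne0 : m' * a + b ≠ 0 := ne_of_gt hneg
        have hαval : α * (m' * a + b) = p₀ * a + q₀ * b - v := by
          rw [hα]
          field_simp
          rw [mul_div_assoc, div_self (by rw [mul_comm a]; exact hne0), mul_one]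
        rw [hcalc, hαval] at hv2
        linarith
      have ha0 : 0 < a := by
        rcases lt_or_ge 0 a with h | h
        · exact h
        · exfalso
          have haz : a = 0 := by nlinarith
          have hbz : b = 0 := by
            rw [haz] at hdir1 hdir2
            rw [mul_zero, zero_add] at hdir1 hdir2
            linarith
          have h0K : (0 : Matrix (Fin n) (Fin n) ℂ).PosSemidef ∧
              ((1 : Matrix (Fin n) (Fin n) ℂ) - 0).PosSemidef := by
            refine ⟨Matrix.PosSemidef.zero, ?_⟩
            rw [sub_zero]
            exact Matrix.PosSemidef.one
          have hmemT : ((((0 : Matrix (Fin n) (Fin n) ℂ) * ρ₁).trace.re,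
              ((0 : Matrix (Fin n) (Fin n) ℂ) * ρ₂).trace.re) : ℝ × ℝ) ∈ T :=
            ⟨0, h0K, rfl⟩
          have h1 := hfu _ hmemT
          rw [hf, haz, hbz] at h1
          rw [haz, hbz] at hfw
          simp at h1 hfw
          linarith
      set t := -b / a with htdef
      have hbt : b = -(t * a) := by
        rw [htdef]
        field_simp
      have htm : m' ≤ t := by
        rw [htdef, le_div_iff₀ ha0]
        nlinarith [hdir2]
      have ht0 : 0 ≤ t := le_trans hm0 htm
      have hineqt := hineq t ht0
      rw [hσd t] at hineqt
      obtain ⟨F, hF, hF1, hFmax⟩ := TPD.exists_maximizer (hherm t)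
      have hlow : p₀ - t * q₀ ≤ (F * (ρ₁ - (t:ℂ) • ρ₂)).trace.re := by
        rw [hFmax, htrt t]
        linarith [le_abs_self (p₀ - t * q₀), neg_le_abs ((1 - p₀) - t * (1 - q₀))]
      rw [hFt F t] at hlow
      have hmemT : ((((F * ρ₁).trace.re, (F * ρ₂).trace.re)) : ℝ × ℝ) ∈ T :=
        ⟨F, ⟨hF, hF1⟩, rfl⟩
      have h1 := hfu _ hmemT
      rw [hf] at h1
      rw [hbt] at h1 hfw
      nlinarith [mul_le_mul_of_nonneg_left hlow (le_of_lt ha0)]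
    obtain ⟨F, ⟨hF, hF1⟩, hC1, hC2⟩ := hTC
    obtain ⟨cx, hx0, hx1⟩ := traceRe F ρ₁ hF hF1 hρ₁ hρ₁tr
    obtain ⟨cy, hy0, hy1⟩ := traceRe F ρ₂ hF hF1 hρ₂ hρ₂tr
    set x := (F * ρ₁).trace.re with hxdef
    set y := (F * ρ₂).trace.re with hydef
    have hyx : y < x := by
      rcases eq_or_lt_of_le hy0 with h | h
      · nlinarith [hC2, hm1]
      · nlinarith [hC1, hM1, mul_pos (sub_pos.mpr hM1) h]
    have hxyp : (0:ℝ) < x - y := by linarith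
    have hxyc : ((x:ℝ):ℂ) - ((y:ℝ):ℂ) ≠ 0 := by
      rw [← Complex.ofReal_sub]
      exact Complex.ofReal_ne_zero.mpr (ne_of_gt hxyp)
    refine ⟨F,
      (((1-y)/(x-y) : ℝ):ℂ) • (ρ₁' - ((m':ℝ):ℂ) • ρ₂') +
        (((x - m'*y - (1-m'))/(x-y) : ℝ):ℂ) • ρ₂',
      ((y/(x-y) : ℝ):ℂ) • (((M':ℝ):ℂ) • ρ₂' - ρ₁') +
        (((x - M'*y)/(x-y) : ℝ):ℂ) • ρ₂', hF, hF1, ?_, ?_, ?_, ?_, ?_, ?_⟩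
    · refine (TP.smul_psd ?_ hmmem).add (TP.smul_psd ?_ hρ₂')
      · apply div_nonneg <;> linarith
      · apply div_nonneg <;> linarith
    · rw [Matrix.trace_add, Matrix.trace_smul, Matrix.trace_smul, Matrix.trace_sub,
        Matrix.trace_smul, hρ₁'tr, hρ₂'tr, smul_eq_mul, smul_eq_mul, smul_eq_mul,
        mul_one, mul_one]
      push_cast
      field_simp
      ring
    · refine (TP.smul_psd ?_ hMmem).add (TP.smul_psd ?_ hρ₂')
      · apply div_nonneg <;> linarith
      · apply div_nonneg <;> linarith
    · rw [Matrix.trace_add, Matrix.trace_smul, Matrix.trace_smul, Matrix.trace_sub,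
        Matrix.trace_smul, hρ₁'tr, hρ₂'tr, smul_eq_mul, smul_eq_mul, smul_eq_mul,
        mul_one, mul_one]
      push_cast
      field_simp
      ring
    · rw [TPD.trace_one_sub_mul, hρ₁tr, cx]
      push_cast
      match_scalars <;> field_simp <;> ring
    · rw [TPD.trace_one_sub_mul, hρ₂tr, cy]
      push_cast
      match_scalars <;> field_simp <;> ring
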